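/- For real symmetric N×N matrices A and B, each pair of correspondingly ordered eigenvalues satisfies |λᵢ(A) - λᵢ(B)| ≤ ||A - B||_F, where eigenvalues are listed in decreasing order and ||·||_F is the Frobenius norm. -/

import Mathlib

open Matrix Finset


variable {N : ℕ}

noncomputable abbrev qf (M : Matrix (Fin N) (Fin N) ℝ) (x : EuclideanSpace ℝ (Fin N)) : ℝ :=
  inner ℝ x (Matrix.toEuclideanLin M x)

lemma toEuc_eigen (M : Matrix (Fin N) (Fin N) ℝ) (hM : M.IsHermitian) (j : Fin N) :
    Matrix.toEuclideanLin M (hM.eigenvectorBasis j)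
      = hM.eigenvalues j • hM.eigenvectorBasis j := by
  apply (WithLp.equiv 2 (Fin N → ℝ)).injective
  rw [WithLp.equiv_apply, Matrix.ofLp_toEuclideanLin_apply]
  have := hM.mulVec_eigenvectorBasis j
  simpa using this

/-- spectral expansion of the quadratic form -/
lemma qf_eq (M : Matrix (Fin N) (Fin N) ℝ) (hM : M.IsHermitian) (x : EuclideanSpace ℝ (Fin N)) :
    qf M x = ∑ j, hM.eigenvalues j * (inner (𝕜 := ℝ) (hM.eigenvectorBasis j) x)^2 := by
  set u := hM.eigenvectorBasis with hu
  have : qf M x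
      = inner ℝ x (Matrix.toEuclideanLin M (∑ j, (inner ℝ (u j) x : ℝ) • u j)) := by
    rw [u.sum_repr']
  rw [this, map_sum, inner_sum]
  refine Finset.sum_congr rfl fun j _ => ?_
  rw [LinearMap.map_smul, toEuc_eigen M hM j, real_inner_smul_right, real_inner_smul_right,
    real_inner_comm]
  ring

/-- coefficients vanish outside the spanning index set -/
lemma inner_eq_zero_of_mem_span (u : OrthonormalBasis (Fin N) ℝ (EuclideanSpace ℝ (Fin N)))
    (s : Set (Fin N)) (x : EuclideanSpace ℝ (Fin N))
    (hx : x ∈ Submodule.span ℝ (u '' s)) {j : Fin N} (hj : j ∉ s) :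
    inner (𝕜 := ℝ) (u j) x = 0 := by
  induction hx using Submodule.span_induction with
  | mem y hy =>
      obtain ⟨k, hk, rfl⟩ := hy
      exact u.orthonormal.2 (fun h => hj (h ▸ hk))
  | zero => simp
  | add y z _ _ hy hz => rw [inner_add_right, hy, hz]; ring
  | smul c y _ hy => rw [real_inner_smul_right, hy]; ring

lemma qf_ge (M : Matrix (Fin N) (Fin N) ℝ) (hM : M.IsHermitian) (s : Set (Fin N)) (c : ℝ)
    (hc : ∀ j ∈ s, c ≤ hM.eigenvalues j) (x : EuclideanSpace ℝ (Fin N))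
    (hx : x ∈ Submodule.span ℝ (hM.eigenvectorBasis '' s)) :
    c * ‖x‖^2 ≤ qf M x := by
  have hpar : ∑ j, (inner (𝕜 := ℝ) (hM.eigenvectorBasis j) x)^2 = ‖x‖^2 := by
    have := (hM.eigenvectorBasis).sum_inner_mul_inner x x
    simp only [real_inner_comm x] at this
    rw [← real_inner_self_eq_norm_sq, ← this]
    exact Finset.sum_congr rfl fun j _ => by rw [sq, real_inner_comm]
  rw [qf_eq M hM, ← hpar, Finset.mul_sum]
  refine Finset.sum_le_sum fun j _ => ?_
  by_cases hj : j ∈ s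
  · exact mul_le_mul_of_nonneg_right (hc j hj) (sq_nonneg _)
  · rw [inner_eq_zero_of_mem_span _ s x hx hj]; simp

lemma qf_le (M : Matrix (Fin N) (Fin N) ℝ) (hM : M.IsHermitian) (s : Set (Fin N)) (c : ℝ)
    (hc : ∀ j ∈ s, hM.eigenvalues j ≤ c) (x : EuclideanSpace ℝ (Fin N))
    (hx : x ∈ Submodule.span ℝ (hM.eigenvectorBasis '' s)) :
    qf M x ≤ c * ‖x‖^2 := by
  have hpar : ∑ j, (inner (𝕜 := ℝ) (hM.eigenvectorBasis j) x)^2 = ‖x‖^2 := by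
    have := (hM.eigenvectorBasis).sum_inner_mul_inner x x
    simp only [real_inner_comm x] at this
    rw [← real_inner_self_eq_norm_sq, ← this]
    exact Finset.sum_congr rfl fun j _ => by rw [sq, real_inner_comm]
  rw [qf_eq M hM, ← hpar, Finset.mul_sum]
  refine Finset.sum_le_sum fun j _ => ?_
  by_cases hj : j ∈ s
  · exact mul_le_mul_of_nonneg_right (hc j hj) (sq_nonneg _)
  · rw [inner_eq_zero_of_mem_span _ s x hx hj]; simp

lemma frob_bound (M : Matrix (Fin N) (Fin N) ℝ) (x : EuclideanSpace ℝ (Fin N)) :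
    qf M x ≤ Real.sqrt (∑ k, ∑ l, (M k l)^2) * ‖x‖^2 := by
  set F := Real.sqrt (∑ k, ∑ l, (M k l)^2) with hF
  have hF0 : 0 ≤ F := Real.sqrt_nonneg _
  have hx2 : ‖x‖^2 = ∑ l, (x l)^2 := by
    rw [EuclideanSpace.norm_eq, Real.sq_sqrt (by positivity)]
    simp [sq_abs]
  have happ : ∀ k, (Matrix.toEuclideanLin M x) k = ∑ l, M k l * x l := by
    intro k
    have := congrFun (Matrix.ofLp_toEuclideanLin_apply M x) k
    simpa [Matrix.mulVec, dotProduct] using this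
  have hnorm2 : ‖Matrix.toEuclideanLin M x‖^2 ≤ F^2 * ‖x‖^2 := by
    rw [EuclideanSpace.norm_eq, Real.sq_sqrt (by positivity), hF,
      Real.sq_sqrt (by positivity), Finset.sum_mul]
    refine Finset.sum_le_sum fun k _ => ?_
    rw [happ k, hx2]
    simpa [sq_abs] using Finset.sum_mul_sq_le_sq_mul_sq Finset.univ (fun l => M k l) (fun l => x l)
  have hnorm : ‖Matrix.toEuclideanLin M x‖ ≤ F * ‖x‖ := by
    nlinarith [norm_nonneg (Matrix.toEuclideanLin M x), norm_nonneg x,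
      mul_nonneg hF0 (norm_nonneg x)]
  calc inner ℝ x (Matrix.toEuclideanLin M x) ≤ ‖x‖ * ‖Matrix.toEuclideanLin M x‖ :=
        real_inner_le_norm _ _
    _ ≤ ‖x‖ * (F * ‖x‖) := by
        exact mul_le_mul_of_nonneg_left hnorm (norm_nonneg x)
    _ = F * ‖x‖^2 := by ring

lemma exists_ne_zero_mem_inf (S T : Submodule ℝ (EuclideanSpace ℝ (Fin N)))
    (h : N < Module.finrank ℝ S + Module.finrank ℝ T) :
    ∃ x, x ≠ 0 ∧ x ∈ S ∧ x ∈ T := by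
  have hsum := Submodule.finrank_sup_add_finrank_inf_eq S T
  have hle : Module.finrank ℝ ↥(S ⊔ T) ≤ N := by
    simpa using Submodule.finrank_le (S ⊔ T)
  have hpos : 0 < Module.finrank ℝ ↥(S ⊓ T) := by omega
  have hne : S ⊓ T ≠ ⊥ := by
    intro hbot
    rw [hbot, finrank_bot] at hpos
    exact lt_irrefl 0 hpos
  obtain ⟨x, hx, hx0⟩ := Submodule.exists_mem_ne_zero_of_ne_bot hne
  exact ⟨x, hx0, hx.1, hx.2⟩

lemma weyl_key (A B : Matrix (Fin N) (Fin N) ℝ) (hA : A.IsHermitian) (hB : B.IsHermitian)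
    (σA σB : Equiv.Perm (Fin N))
    (hσA : Antitone (hA.eigenvalues ∘ σA))
    (hσB : Antitone (hB.eigenvalues ∘ σB)) (i : Fin N) :
    hA.eigenvalues (σA i) - hB.eigenvalues (σB i) ≤
      Real.sqrt (∑ k, ∑ l, ((A - B) k l) ^ 2) := by
  classical
  set sA : Set (Fin N) := σA '' Set.Iic i with hsA
  set sB : Set (Fin N) := σB '' Set.Ici i with hsB
  set S := Submodule.span ℝ (hA.eigenvectorBasis '' sA) with hS
  set T := Submodule.span ℝ (hB.eigenvectorBasis '' sB) with hT
  have hrange : ∀ (u : OrthonormalBasis (Fin N) ℝ (EuclideanSpace ℝ (Fin N)))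
      (σ : Equiv.Perm (Fin N)) (s : Set (Fin N)),
      u '' (σ '' s) = Set.range (fun k : s => u (σ k)) := by
    intro u σ s
    rw [Set.image_image, Set.image_eq_range]
  have hfinS : Module.finrank ℝ S = i + 1 := by
    rw [hS, hsA, hrange]
    exact (finrank_span_eq_card
      ((hA.eigenvectorBasis.orthonormal.comp _
        (σA.injective.comp Subtype.val_injective)).linearIndependent)).trans
      (by convert (show Fintype.card (Set.Iic i) = i + 1 by simp))
  have hfinT : Module.finrank ℝ T = N - i := by
    rw [hT, hsB, hrange]
    exact (finrank_span_eq_card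
      ((hB.eigenvectorBasis.orthonormal.comp _
        (σB.injective.comp Subtype.val_injective)).linearIndependent)).trans
      (by convert (show Fintype.card (Set.Ici i) = N - i by simp))
  obtain ⟨x, hx0, hxS, hxT⟩ := exists_ne_zero_mem_inf S T (by
    rw [hfinS, hfinT]
    have := i.isLt
    omega)
  have h1 : hA.eigenvalues (σA i) * ‖x‖^2 ≤ qf A x := by
    refine qf_ge A hA sA _ ?_ x hxS
    rintro j ⟨k, hk, rfl⟩
    exact hσA hk
  have h2 : qf B x ≤ hB.eigenvalues (σB i) * ‖x‖^2 := by
    refine qf_le B hB sB _ ?_ x hxT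
    rintro j ⟨k, hk, rfl⟩
    exact hσB hk
  have h3 : qf (A - B) x = qf A x - qf B x := by
    simp only [qf, map_sub, LinearMap.sub_apply, inner_sub_right]
  have h4 := frob_bound (A - B) x
  have hx2 : (0:ℝ) < ‖x‖^2 := by
    have : ‖x‖ ≠ 0 := norm_ne_zero_iff.mpr hx0
    positivity
  have : (hA.eigenvalues (σA i) - hB.eigenvalues (σB i)) * ‖x‖^2 ≤
      Real.sqrt (∑ k, ∑ l, ((A - B) k l) ^ 2) * ‖x‖^2 := by
    rw [h3] at h4
    nlinarith
  exact le_of_mul_le_mul_right this hx2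

/-- Weyl-type perturbation bound: for real symmetric `N×N` matrices `A` and `B` with
eigenvalues listed in decreasing order, `|λᵢ(A) - λᵢ(B)| ≤ ‖A - B‖_F` for each `i`. -/
theorem eigenvalue_perturbation_frobenius {N : ℕ}
    (A B : Matrix (Fin N) (Fin N) ℝ) (hA : A.IsHermitian) (hB : B.IsHermitian)
    (σA σB : Equiv.Perm (Fin N))
    (hσA : Antitone (hA.eigenvalues ∘ σA))
    (hσB : Antitone (hB.eigenvalues ∘ σB)) :
    ∀ i, |hA.eigenvalues (σA i) - hB.eigenvalues (σB i)| ≤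
      Real.sqrt (∑ k, ∑ l, ((A - B) k l) ^ 2) := by
  intro i
  rw [abs_sub_le_iff]
  constructor
  · exact weyl_key A B hA hB σA σB hσA hσB i
  · have h := weyl_key B A hB hA σB σA hσB hσA i
    have hsq : (∑ k, ∑ l, ((B - A) k l) ^ 2) = ∑ k, ∑ l, ((A - B) k l) ^ 2 := by
      refine Finset.sum_congr rfl fun k _ => Finset.sum_congr rfl fun l _ => ?_
      simp only [Matrix.sub_apply]
      ring
    rwa [hsq] at h
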